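/- Exactness of the anisotropic interior scheme on quartic polynomials when K = 0 (zero advection): Let A₁₁ = A₂₂, A₁₂ be constants, u a polynomial of total degree at most 4, and f = A₁₁u_xx + 2A₁₂u_xy + A₁₁u_yy. Then for every h > 0 and every (x,y): Σ_{i,j∈{−1,0,1}} α_{ij} u(x+ih, y+jh) = Σ_{i,j} β_{ij} f(x+ih, y+jh), where (with λ = 12A₁₁) α is given by (5.7) with K = 0 and β by (5.8) with K = 0. -/

import Mathlib

private lemma quartic_hasDerivAt (a0 a1 a2 a3 a4 X : ℝ) :
    HasDerivAt (fun s : ℝ => a0 + a1 * s + a2 * s ^ 2 + a3 * s ^ 3 + a4 * s ^ 4)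
      (a1 + 2 * a2 * X + 3 * a3 * X ^ 2 + 4 * a4 * X ^ 3) X := by
  have h1 : HasDerivAt (fun s : ℝ => a1 * s) (a1 * 1) X := (hasDerivAt_id X).const_mul a1
  have h2 : HasDerivAt (fun s : ℝ => a2 * s ^ 2) (a2 * (2 * X ^ 1)) X :=
    (hasDerivAt_pow 2 X).const_mul a2
  have h3 : HasDerivAt (fun s : ℝ => a3 * s ^ 3) (a3 * (3 * X ^ 2)) X :=
    (hasDerivAt_pow 3 X).const_mul a3
  have h4 : HasDerivAt (fun s : ℝ => a4 * s ^ 4) (a4 * (4 * X ^ 3)) X :=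
    (hasDerivAt_pow 4 X).const_mul a4
  have := ((((hasDerivAt_const X a0).add h1).add h2).add h3).add h4
  exact this.congr_deriv (by ring)

noncomputable def pdx (u : ℝ → ℝ → ℝ) : ℝ → ℝ → ℝ := fun x y => deriv (fun s => u s y) x
noncomputable def pdy (u : ℝ → ℝ → ℝ) : ℝ → ℝ → ℝ := fun x y => deriv (fun t => u x t) y

/-- Exactness of the anisotropic interior scheme (K = 0, zero advection, A₂₂ = A₁₁)
on polynomials of total degree ≤ 4, with `f = A₁₁u_xx + 2A₁₂u_xy + A₁₁u_yy`. -/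
theorem anisotropic_interior_scheme_exact_on_quartics (u : ℝ → ℝ → ℝ) (c : ℕ → ℕ → ℝ)
    (hu : ∀ x y : ℝ, u x y =
      ∑ k₁ ∈ Finset.range 5, ∑ k₂ ∈ Finset.range 5,
        if k₁ + k₂ ≤ 4 then c k₁ k₂ * x ^ k₁ * y ^ k₂ else 0)
    (A11 A12 lam : ℝ) (hA : A11 ≠ 0) (hlam : lam = 12 * A11)
    (f : ℝ → ℝ → ℝ)
    (hf : ∀ x y : ℝ, f x y = A11 * pdx (pdx u) x y + 2 * A12 * pdy (pdx u) x y
        + A11 * pdy (pdy u) x y)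
    (h : ℝ) (hh : 0 < h) (x y : ℝ) :
    (1 / (lam * h ^ 2)) *
        (2 * (A11 + A12) * (A11 + 2 * A12) * (u (x + h) (y + h) + u (x - h) (y - h))
          + 2 * (A11 - 2 * A12) * (A11 - A12) * (u (x + h) (y - h) + u (x - h) (y + h))
          + 8 * (A11 ^ 2 - A12 ^ 2) *
              (u (x + h) y + u (x - h) y + u x (y + h) + u x (y - h))
          - 8 * (5 * A11 ^ 2 - 2 * A12 ^ 2) * u x y)
      = (1 / (2 * lam)) *
          ((A11 + A12) * (f (x + h) (y + h) + f (x - h) (y - h))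
            + (A11 - A12) * (f (x + h) (y - h) + f (x - h) (y + h))
            + 20 * A11 * f x y) := by
  have hu' : ∀ X Y : ℝ, u X Y =
      (c 0 0 + c 0 1 * Y + c 0 2 * Y ^ 2 + c 0 3 * Y ^ 3 + c 0 4 * Y ^ 4)
      + (c 1 0 + c 1 1 * Y + c 1 2 * Y ^ 2 + c 1 3 * Y ^ 3) * X
      + (c 2 0 + c 2 1 * Y + c 2 2 * Y ^ 2) * X ^ 2
      + (c 3 0 + c 3 1 * Y) * X ^ 3
      + c 4 0 * X ^ 4 := by
    intro X Y
    rw [hu]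
    norm_num [Finset.sum_range_succ]
    ring
  -- first x-derivative
  have hux : ∀ X Y : ℝ, pdx u X Y =
      (c 1 0 + c 1 1 * Y + c 1 2 * Y ^ 2 + c 1 3 * Y ^ 3)
      + 2 * (c 2 0 + c 2 1 * Y + c 2 2 * Y ^ 2) * X
      + 3 * (c 3 0 + c 3 1 * Y) * X ^ 2
      + 4 * c 4 0 * X ^ 3 := by
    intro X Y
    have he : (fun s => u s Y) = fun s : ℝ =>
        (c 0 0 + c 0 1 * Y + c 0 2 * Y ^ 2 + c 0 3 * Y ^ 3 + c 0 4 * Y ^ 4)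
        + (c 1 0 + c 1 1 * Y + c 1 2 * Y ^ 2 + c 1 3 * Y ^ 3) * s
        + (c 2 0 + c 2 1 * Y + c 2 2 * Y ^ 2) * s ^ 2
        + (c 3 0 + c 3 1 * Y) * s ^ 3
        + c 4 0 * s ^ 4 := funext fun s => hu' s Y
    show deriv (fun s => u s Y) X = _
    rw [he, (quartic_hasDerivAt _ _ _ _ _ X).deriv]
  -- first y-derivative
  have huy : ∀ X Y : ℝ, pdy u X Y =
      (c 0 1 + c 1 1 * X + c 2 1 * X ^ 2 + c 3 1 * X ^ 3)
      + 2 * (c 0 2 + c 1 2 * X + c 2 2 * X ^ 2) * Y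
      + 3 * (c 0 3 + c 1 3 * X) * Y ^ 2
      + 4 * c 0 4 * Y ^ 3 := by
    intro X Y
    have he : (fun t => u X t) = fun t : ℝ =>
        (c 0 0 + c 1 0 * X + c 2 0 * X ^ 2 + c 3 0 * X ^ 3 + c 4 0 * X ^ 4)
        + (c 0 1 + c 1 1 * X + c 2 1 * X ^ 2 + c 3 1 * X ^ 3) * t
        + (c 0 2 + c 1 2 * X + c 2 2 * X ^ 2) * t ^ 2
        + (c 0 3 + c 1 3 * X) * t ^ 3
        + c 0 4 * t ^ 4 := funext fun t => by rw [hu' X t]; ring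
    show deriv (fun t => u X t) Y = _
    rw [he, (quartic_hasDerivAt _ _ _ _ _ Y).deriv]
  -- second derivatives
  have huxx : ∀ X Y : ℝ, pdx (pdx u) X Y =
      2 * (c 2 0 + c 2 1 * Y + c 2 2 * Y ^ 2)
      + 2 * (3 * (c 3 0 + c 3 1 * Y)) * X
      + 3 * (4 * c 4 0) * X ^ 2
      + 4 * 0 * X ^ 3 := by
    intro X Y
    have he : (fun s => pdx u s Y) = fun s : ℝ =>
        (c 1 0 + c 1 1 * Y + c 1 2 * Y ^ 2 + c 1 3 * Y ^ 3)
        + 2 * (c 2 0 + c 2 1 * Y + c 2 2 * Y ^ 2) * s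
        + 3 * (c 3 0 + c 3 1 * Y) * s ^ 2
        + 4 * c 4 0 * s ^ 3
        + 0 * s ^ 4 := funext fun s => by rw [hux s Y]; ring
    show deriv (fun s => pdx u s Y) X = _
    rw [he, (quartic_hasDerivAt _ _ _ _ _ X).deriv]
  have huxy : ∀ X Y : ℝ, pdy (pdx u) X Y =
      (c 1 1 + 2 * c 2 1 * X + 3 * c 3 1 * X ^ 2)
      + 2 * (c 1 2 + 2 * c 2 2 * X) * Y
      + 3 * c 1 3 * Y ^ 2
      + 4 * 0 * Y ^ 3 := by
    intro X Y
    have he : (fun t => pdx u X t) = fun t : ℝ =>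
        (c 1 0 + 2 * c 2 0 * X + 3 * c 3 0 * X ^ 2 + 4 * c 4 0 * X ^ 3)
        + (c 1 1 + 2 * c 2 1 * X + 3 * c 3 1 * X ^ 2) * t
        + (c 1 2 + 2 * c 2 2 * X) * t ^ 2
        + c 1 3 * t ^ 3
        + 0 * t ^ 4 := funext fun t => by rw [hux X t]; ring
    show deriv (fun t => pdx u X t) Y = _
    rw [he, (quartic_hasDerivAt _ _ _ _ _ Y).deriv]
  have huyy : ∀ X Y : ℝ, pdy (pdy u) X Y =
      2 * (c 0 2 + c 1 2 * X + c 2 2 * X ^ 2)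
      + 2 * (3 * (c 0 3 + c 1 3 * X)) * Y
      + 3 * (4 * c 0 4) * Y ^ 2
      + 4 * 0 * Y ^ 3 := by
    intro X Y
    have he : (fun t => pdy u X t) = fun t : ℝ =>
        (c 0 1 + c 1 1 * X + c 2 1 * X ^ 2 + c 3 1 * X ^ 3)
        + 2 * (c 0 2 + c 1 2 * X + c 2 2 * X ^ 2) * t
        + 3 * (c 0 3 + c 1 3 * X) * t ^ 2
        + 4 * c 0 4 * t ^ 3
        + 0 * t ^ 4 := funext fun t => by rw [huy X t]; ring
    show deriv (fun t => pdy u X t) Y = _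
    rw [he, (quartic_hasDerivAt _ _ _ _ _ Y).deriv]
  have hf' : ∀ X Y : ℝ, f X Y =
      A11 * (2 * (c 2 0 + c 2 1 * Y + c 2 2 * Y ^ 2) + 6 * (c 3 0 + c 3 1 * Y) * X
          + 12 * c 4 0 * X ^ 2)
      + 2 * A12 * ((c 1 1 + 2 * c 2 1 * X + 3 * c 3 1 * X ^ 2)
          + 2 * (c 1 2 + 2 * c 2 2 * X) * Y + 3 * c 1 3 * Y ^ 2)
      + A11 * (2 * (c 0 2 + c 1 2 * X + c 2 2 * X ^ 2) + 6 * (c 0 3 + c 1 3 * X) * Y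
          + 12 * c 0 4 * Y ^ 2) := by
    intro X Y
    rw [hf, huxx, huxy, huyy]
    ring
  subst hlam
  rw [hu', hu', hu', hu', hu', hu', hu', hu', hu', hf', hf', hf', hf', hf']
  field_simp
  ring
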